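/- Let n ≥ 1 be a number of actions and let u^1, …, u^T : Fin n → ℝ be a sequence of payoff vectors such that for each t, max_a u^t(a) − min_a u^t(a) ≤ Δ for some Δ ≥ 0. Define strategies σ^t ∈ Δ_n by regret matching: with cumulative regret R^{t−1}(a) = Σ_{s=1}^{t−1} ( u^s(a) − Σ_b σ^s(b) u^s(b) ) and R^{t−1}_+(a) = max(R^{t−1}(a), 0), set σ^t(a) = R^{t−1}_+(a) / Σ_b R^{t−1}_+(b) if Σ_b R^{t−1}_+(b) > 0 and σ^t(a) = 1/n otherwise. Then for all T ≥ 1 and all actions a, the cumulative regret satisfies R^T(a) ≤ Δ · √n · √T. -/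

import Mathlib

/-- Regret bound for regret matching: if each payoff vector `u t` has range at
most `Δ`, and the strategies `σ t` are chosen by regret matching (proportional
to the positive parts of the cumulative regrets `R t`, uniform if all are
nonpositive), then for all `T ≥ 1` and all actions `a`,
`R T a ≤ Δ * √n * √T`. Here rounds are indexed `0, …, T-1`, so `R t` is the
cumulative regret over the first `t` rounds (i.e. `R^{t-1}` in 1-indexed
notation) and `σ t` depends on `R t`. -/
theorem regret_matching_cumulative_regret_bound
    {n : ℕ} (hn : 1 ≤ n) (Δ : ℝ) (hΔ : 0 ≤ Δ)
    (u : ℕ → Fin n → ℝ)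
    (hu : ∀ t, ∀ a b : Fin n, u t a - u t b ≤ Δ)
    (σ : ℕ → Fin n → ℝ) (R : ℕ → Fin n → ℝ)
    (hR : ∀ t a, R t a =
      ∑ s ∈ Finset.range t, (u s a - ∑ b, σ s b * u s b))
    (hσ : ∀ t a, σ t a =
      if 0 < ∑ b, max (R t b) 0
      then max (R t a) 0 / ∑ b, max (R t b) 0
      else 1 / n)
    (T : ℕ) (hT : 1 ≤ T) (a : Fin n) :
    R T a ≤ Δ * Real.sqrt n * Real.sqrt T := by
  have hn0 : (0:ℝ) < n := by positivity
  have hσnn : ∀ t b, 0 ≤ σ t b := by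
    intro t b
    rw [hσ]
    split
    · positivity
    · positivity
  have hσ1 : ∀ t, ∑ b, σ t b = 1 := by
    intro t
    rcases lt_or_ge 0 (∑ b, max (R t b) 0) with h | h
    · have hne : (∑ b, max (R t b) 0) ≠ 0 := ne_of_gt h
      calc ∑ b, σ t b = ∑ b, max (R t b) 0 / ∑ c, max (R t c) 0 := by
            apply Finset.sum_congr rfl; intro b _; rw [hσ, if_pos h]
        _ = 1 := by rw [← Finset.sum_div, div_self hne]
    · calc ∑ b, σ t b = ∑ _b : Fin n, (1:ℝ)/n := by
            apply Finset.sum_congr rfl; intro b _; rw [hσ, if_neg (not_lt.mpr h)]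
        _ = 1 := by
            rw [Finset.sum_const, Finset.card_univ, Fintype.card_fin, nsmul_eq_mul]
            field_simp
  -- instantaneous regret is bounded by Δ in absolute value
  have hrange : ∀ t c, |u t c - ∑ b, σ t b * u t b| ≤ Δ := by
    intro t c
    have hrw : u t c - ∑ b, σ t b * u t b = ∑ b, σ t b * (u t c - u t b) := by
      rw [Finset.sum_congr rfl (fun b _ => mul_sub (σ t b) (u t c) (u t b)),
        Finset.sum_sub_distrib, ← Finset.sum_mul, hσ1, one_mul]
    rw [hrw, abs_le]
    constructor
    · have : ∑ b, σ t b * (-Δ) ≤ ∑ b, σ t b * (u t c - u t b) := by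
        apply Finset.sum_le_sum
        intro b _
        apply mul_le_mul_of_nonneg_left _ (hσnn t b)
        have := hu t b c
        linarith
      calc -Δ = ∑ b, σ t b * (-Δ) := by rw [← Finset.sum_mul, hσ1, one_mul]
        _ ≤ _ := this
    · calc ∑ b, σ t b * (u t c - u t b) ≤ ∑ b, σ t b * Δ := by
            apply Finset.sum_le_sum
            intro b _
            exact mul_le_mul_of_nonneg_left (hu t c b) (hσnn t b)
        _ = Δ := by rw [← Finset.sum_mul, hσ1, one_mul]
  -- Blackwell condition: the inner product of positive regrets with
  -- instantaneous regrets is zero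
  have bw : ∀ t, ∑ c, max (R t c) 0 * (u t c - ∑ b, σ t b * u t b) = 0 := by
    intro t
    rcases lt_or_ge 0 (∑ b, max (R t b) 0) with h | h
    · have hne : (∑ b, max (R t b) 0) ≠ 0 := ne_of_gt h
      have hV : ∑ b, σ t b * u t b
          = (∑ b, max (R t b) 0 * u t b) / ∑ c, max (R t c) 0 := by
        rw [Finset.sum_div]
        apply Finset.sum_congr rfl
        intro b _
        rw [hσ, if_pos h, div_mul_eq_mul_div]
      rw [Finset.sum_congr rfl
        (fun c _ => mul_sub (max (R t c) 0) (u t c) (∑ b, σ t b * u t b)),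
        Finset.sum_sub_distrib, ← Finset.sum_mul, hV]
      field_simp
      ring
    · have hall : ∀ c ∈ Finset.univ, max (R t c) 0 = 0 := by
        have := (Finset.sum_eq_zero_iff_of_nonneg
          (fun b (_ : b ∈ Finset.univ) => le_max_right (R t b) 0)).mp
          (le_antisymm h (Finset.sum_nonneg fun b _ => le_max_right (R t b) 0))
        exact this
      apply Finset.sum_eq_zero
      intro c hc
      rw [hall c hc, zero_mul]
  -- pointwise potential step inequality
  have key : ∀ x r : ℝ, (max (x + r) 0)^2 ≤ (max x 0)^2 + 2*(max x 0)*r + r^2 := by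
    intro x r
    have h1 : (max (x + r) 0)^2 ≤ (max x 0 + r)^2 := by
      rcases le_or_gt (x + r) 0 with h | h
      · rw [max_eq_right h]
        simpa using sq_nonneg (max x 0 + r)
      · rw [max_eq_left h.le]
        have h2 : x ≤ max x 0 := le_max_left x 0
        nlinarith
    nlinarith
  -- potential bound by induction
  have Φbound : ∀ t, ∑ c, (max (R t c) 0)^2 ≤ t * (n * Δ^2) := by
    intro t
    induction t with
    | zero => simp [hR]
    | succ t ih =>
      have hRrec : ∀ c, R (t+1) c = R t c + (u t c - ∑ b, σ t b * u t b) := by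
        intro c
        rw [hR (t+1) c, Finset.sum_range_succ, ← hR t c]
      have step : ∑ c, (max (R (t+1) c) 0)^2
          ≤ ∑ c, (max (R t c) 0)^2 + n * Δ^2 := by
        calc ∑ c, (max (R (t+1) c) 0)^2
            ≤ ∑ c, ((max (R t c) 0)^2
                + 2*(max (R t c) 0)*(u t c - ∑ b, σ t b * u t b)
                + (u t c - ∑ b, σ t b * u t b)^2) := by
              apply Finset.sum_le_sum
              intro c _
              rw [hRrec c]
              exact key _ _
          _ = ∑ c, (max (R t c) 0)^2
                + 2 * ∑ c, (max (R t c) 0)*(u t c - ∑ b, σ t b * u t b)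
                + ∑ c, (u t c - ∑ b, σ t b * u t b)^2 := by
              rw [Finset.sum_add_distrib, Finset.sum_add_distrib, Finset.mul_sum]
              congr 2
              exact Finset.sum_congr rfl fun c _ => by ring
          _ ≤ ∑ c, (max (R t c) 0)^2 + n * Δ^2 := by
              have hsq : ∑ c, (u t c - ∑ b, σ t b * u t b)^2
                  ≤ ∑ _c : Fin n, Δ^2 := by
                apply Finset.sum_le_sum
                intro c _
                have h := hrange t c
                calc (u t c - ∑ b, σ t b * u t b)^2
                    = |u t c - ∑ b, σ t b * u t b|^2 := (sq_abs _).symm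
                  _ ≤ Δ^2 := pow_le_pow_left₀ (abs_nonneg _) h 2
              have hconst : ∑ _c : Fin n, Δ^2 = n * Δ^2 := by
                rw [Finset.sum_const, Finset.card_univ, Fintype.card_fin,
                  nsmul_eq_mul]
              rw [bw t]
              linarith
      have hcast : ((t:ℝ)+1) * ((n:ℝ) * Δ^2) = (t:ℝ) * ((n:ℝ)*Δ^2) + (n:ℝ)*Δ^2 := by
        ring
      push_cast
      linarith
  have h1 : (max (R T a) 0)^2 ≤ T * (n * Δ^2) := by
    calc (max (R T a) 0)^2 ≤ ∑ c, (max (R T c) 0)^2 :=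
          Finset.single_le_sum (f := fun c => (max (R T c) 0)^2)
            (fun c _ => sq_nonneg _) (Finset.mem_univ a)
      _ ≤ T * (n * Δ^2) := Φbound T
  have h2 : max (R T a) 0 ≤ Real.sqrt (T * (n * Δ^2)) := by
    calc max (R T a) 0 = Real.sqrt ((max (R T a) 0)^2) :=
          (Real.sqrt_sq (le_max_right _ _)).symm
      _ ≤ Real.sqrt (T * (n * Δ^2)) := Real.sqrt_le_sqrt h1
  have h3 : Real.sqrt (T * (n * Δ^2)) = Δ * Real.sqrt n * Real.sqrt T := by
    rw [Real.sqrt_mul (by positivity) (n * Δ^2),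
      Real.sqrt_mul (by positivity) (Δ^2), Real.sqrt_sq hΔ]
    ring
  calc R T a ≤ max (R T a) 0 := le_max_left _ _
    _ ≤ Real.sqrt (T * (n * Δ^2)) := h2
    _ = Δ * Real.sqrt n * Real.sqrt T := h3
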